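/- Let d ≥ 2, L > 0, δ ∈ (0,1). Let x, y : [0,∞) → ℝ^d be Lipschitz curves with x(0), y(0) ∈ D₂ and 0 < x_d(0) ≤ y_d(0), |y'(t)| ≤ 1 for almost every t, x'(t) = χ^(d)(x(t), y(t)) for almost every t, and suppose y(t) ∈ cl(D₂) for all t ≥ 0. Then there exists a finite time t with |x_d(t) − y_d(t)| ≤ δ; letting u_d be the first such time, one has: (1) u_d ≤ L/δ; (2) |Π_{d−1}(x(u_d) − y(u_d))| ≤ |Π_{d−1}(x(0) − y(0))| + (L+1)δ; and (3) x_d(0) ≤ x_d(t) ≤ y_d(t) for all 0 ≤ t ≤ u_d. -/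

import Mathlib

open Set MeasureTheory
open scoped ENNReal RealInnerProductSpace

noncomputable section

namespace PursuitRB

/-- Euclidean space `ℝ^d`. -/
abbrev E (d : ℕ) : Type := EuclideanSpace ℝ (Fin d)

variable {d : ℕ}

/-- The intrinsic distance in the closure of `D`: the infimum of lengths of continuous
rectifiable curves joining the two points inside `cl D`. -/
def intrinsicDist (D : Set (E d)) (v z : E d) : ℝ≥0∞ :=
  ⨅ (γ : ℝ → E d) (_ : ContinuousOn γ (Icc 0 1)) (_ : ∀ t ∈ Icc (0:ℝ) 1, γ t ∈ closure D)
    (_ : γ 0 = v) (_ : γ 1 = z), eVariationOn γ (Icc 0 1)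

/-- Intrinsic Hausdorff distance between two subsets of `cl D`. -/
def hausdorffI (D A B : Set (E d)) : ℝ≥0∞ :=
  max (⨆ v ∈ A, ⨅ z ∈ B, intrinsicDist D v z) (⨆ v ∈ B, ⨅ z ∈ A, intrinsicDist D v z)

/-- A domain: a nonempty open connected set. -/
def IsDomain (D : Set (E d)) : Prop := IsOpen D ∧ IsConnected D

/-- The set of exterior unit normals at a boundary point. -/
def extNormals (D : Set (E d)) (z : E d) (r : ℝ) : Set (E d) :=
  {ν | ‖ν‖ = 1 ∧ Metric.ball (z + r • ν) r ∩ D = ∅}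

/-- Uniform exterior sphere condition with radius `r`. -/
def UnifExtSphere (D : Set (E d)) (r : ℝ) : Prop :=
  ∀ z ∈ frontier D, (extNormals D z r).Nonempty ∧
    ∀ s : ℝ, 0 < s → s ≤ r → extNormals D z s = extNormals D z r

/-- Uniform interior cone condition with radius `δ₀` and angle `α`. -/
def UnifIntCone (D : Set (E d)) (δ₀ α : ℝ) : Prop :=
  ∀ v ∈ frontier D, ∃ m : E d, ‖m‖ = 1 ∧
    ∀ w ∈ D ∩ Metric.ball v δ₀, ∀ u : E d, ‖u‖ * Real.cos α < ⟪u, m⟫ →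
      w + u ∈ Metric.ball v δ₀ → w + u ∈ D

/-- ESIC domain: a bounded domain satisfying the uniform exterior sphere condition and the
uniform interior cone condition. -/
def IsESIC (D : Set (E d)) : Prop :=
  IsDomain D ∧ Bornology.IsBounded D ∧
    (∃ r > 0, UnifExtSphere D r) ∧
    (∃ δ₀ > 0, ∃ α : ℝ, 0 < α ∧ α ≤ Real.pi / 2 ∧ UnifIntCone D δ₀ α)

/-- A rectifiable loop in `cl D`, parametrized by arc length (periodically, with
period equal to its length). -/
structure Loop (D : Set (E d)) where
  toFun : ℝ → E d
  len : ℝ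
  len_nonneg : 0 ≤ len
  cont : Continuous toFun
  mem : ∀ t, toFun t ∈ closure D
  periodic : Function.Periodic toFun len
  unitSpeed : ∀ s ∈ Icc (0:ℝ) len, eVariationOn toFun (Icc 0 s) = ENNReal.ofReal s
  const_of_len_zero : len = 0 → ∀ s t, toFun s = toFun t

/-- The image of a loop. -/
def Loop.image {D : Set (E d)} (K : Loop D) : Set (E d) := K.toFun '' Icc 0 K.len

/-- The euclidean `ε`-neighbourhood of (the image of) a loop inside `cl D`. -/
def loopNbhd (D : Set (E d)) (K : Loop D) (ε : ℝ) : Set (E d) :=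
  {z ∈ closure D | Metric.infDist z K.image < ε}

/-- `f` and `g`, viewed as loops parametrized by the circle `ℝ / ℤ`, are homotopic through a
homotopy taking values in `S`. -/
def LoopHomotopyIn (S : Set (E d)) (f g : ℝ → E d) : Prop :=
  ∃ H : ℝ → ℝ → E d,
    ContinuousOn (fun p : ℝ × ℝ => H p.1 p.2) (univ ×ˢ Icc (0:ℝ) 1) ∧
    (∀ t γ, H (t + 1) γ = H t γ) ∧
    (∀ t : ℝ, ∀ γ ∈ Icc (0:ℝ) 1, H t γ ∈ S) ∧
    (∀ t, H t 0 = f t) ∧ (∀ t, H t 1 = g t)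

/-- Semi-stable rubber band. -/
def IsSemiStableRB (D : Set (E d)) (K : Loop D) : Prop :=
  ∃ ε > 0, ∀ K₁ : Loop D,
    LoopHomotopyIn (closure (loopNbhd D K ε)) (fun t => K.toFun (t * K.len))
      (fun t => K₁.toFun (t * K₁.len)) → K.len ≤ K₁.len

/-- Stable rubber band. -/
def IsStableRB (D : Set (E d)) (K : Loop D) : Prop :=
  IsSemiStableRB D K ∧
  ∃ ε > 0, ∀ η : ℝ, 0 < η → η ≤ ε → ∃ δ > 0, ∀ K₁ : Loop D,
    ENNReal.ofReal η ≤ hausdorffI D K.image K₁.image →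
    ∀ n : ℕ, 1 ≤ n →
      LoopHomotopyIn (closure (loopNbhd D K ε)) (fun t => K.toFun (t * (n * K.len)))
        (fun t => K₁.toFun (t * K₁.len)) →
      n * K.len + δ < K₁.len

/-- A length-monotonic homotopy contracting the loop `K` to a point of `cl D`. -/
structure Contraction (D : Set (E d)) (K : Loop D) where
  fam : ℝ → Loop D
  H : ℝ → ℝ → E d
  cont : ContinuousOn (fun p : ℝ × ℝ => H p.1 p.2) (univ ×ˢ Icc (0:ℝ) 1)
  periodic : ∀ t γ, H (t + 1) γ = H t γ
  compat : ∀ t : ℝ, ∀ γ ∈ Icc (0:ℝ) 1, H t γ = (fam γ).toFun (t * (fam γ).len)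
  init : fam 0 = K
  final : (fam 1).len = 0
  mono : AntitoneOn (fun γ => (fam γ).len) (Icc (0:ℝ) 1)

/-- `K` is well-contractible with contractibility constant `c`. -/
def WellContractible (D : Set (E d)) (K : Loop D) (c : ℝ) : Prop :=
  ∃ C : Contraction D K, ∀ γ η : ℝ, γ ∈ Icc (0:ℝ) 1 → η ∈ Icc (0:ℝ) 1 → γ < η →
    ENNReal.ofReal c * hausdorffI D (C.fam γ).image (C.fam η).image *
        ENNReal.ofReal (C.fam γ).len
      ≤ ENNReal.ofReal ((C.fam γ).len - (C.fam η).len)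

/-- A CL domain: a bounded ESIC domain all of whose loops are uniformly well-contractible. -/
def IsCLDomain (D : Set (E d)) : Prop :=
  IsESIC D ∧ ∃ c > 0, ∀ K : Loop D, WellContractible D K c

/-- An admissible curve in `cl D`: continuous and `1`-Lipschitz for the intrinsic distance. -/
def Admissible (D : Set (E d)) (x : ℝ → E d) : Prop :=
  ContinuousOn x (Ici 0) ∧ (∀ t : ℝ, 0 ≤ t → x t ∈ closure D) ∧
    ∀ s t : ℝ, 0 ≤ s → 0 ≤ t → intrinsicDist D (x s) (x t) ≤ ENNReal.ofReal |s - t|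

/-- The topology of uniform convergence on compacts on the path space. -/
def curveTop (d : ℕ) : TopologicalSpace (ℝ → E d) :=
  UniformOnFun.topologicalSpace ℝ (E d) {K : Set ℝ | IsCompact K}

/-- Borel measurability of a strategy with respect to the topology of uniform convergence
on compacts on the path space. -/
def StratMeasurable (d : ℕ) (F : ℝ → (ℝ → E d) → (ℝ → E d) → E d) : Prop :=
  letI : TopologicalSpace (ℝ → E d) := curveTop d
  letI : MeasurableSpace (ℝ → E d) := borel (ℝ → E d)
  Measurable fun p : ℝ × (ℝ → E d) × (ℝ → E d) => F p.1 p.2.1 p.2.2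

/-- A strategy is non-anticipative. -/
def NonAnticipative (d : ℕ) (F : ℝ → (ℝ → E d) → (ℝ → E d) → E d) : Prop :=
  ∀ t : ℝ, 0 ≤ t → ∀ x x' y y' : ℝ → E d,
    (∀ s, 0 ≤ s → s ≤ t → x s = x' s) → (∀ s, 0 ≤ s → s ≤ t → y s = y' s) →
    F t x y = F t x' y'

/-- The family `Λ` of quadruples `(x, y, Fx, Fy)`. -/
def InLambda (D : Set (E d)) (x y : ℝ → E d)
    (Fx Fy : ℝ → (ℝ → E d) → (ℝ → E d) → E d) : Prop :=
  Admissible D x ∧ Admissible D y ∧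
  StratMeasurable d Fx ∧ StratMeasurable d Fy ∧
  NonAnticipative d Fx ∧ NonAnticipative d Fy ∧
  (∀ t : ℝ, 0 ≤ t → ∀ v, HasDerivAt x v t → v = Fx t x y) ∧
  (∀ t : ℝ, 0 ≤ t → ∀ v, HasDerivAt y v t → v = Fy t x y)

/-- The family `Λ₀ ⊆ Λ`: the pursuer's strategy does not depend on the evader's path. -/
def InLambda0 (D : Set (E d)) (x y : ℝ → E d)
    (Fx Fy : ℝ → (ℝ → E d) → (ℝ → E d) → E d) : Prop :=
  InLambda D x y Fx Fy ∧ ∀ t : ℝ, 0 ≤ t → ∀ w u u' : ℝ → E d, Fx t w u = Fx t w u'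

/-- `inf_{t ≥ 0} dist_I(x(t), y(t))`. -/
def evasionInf (D : Set (E d)) (x y : ℝ → E d) : ℝ≥0∞ :=
  ⨅ t ∈ Ici (0:ℝ), intrinsicDist D (x t) (y t)

/-- The Man has a successful evasion strategy from `(x₀, y₀)`. -/
def SuccessfulEvasion (D : Set (E d)) (x₀ y₀ : E d) : Prop :=
  (∃ x y Fx Fy, x 0 = x₀ ∧ y 0 = y₀ ∧ InLambda D x y Fx Fy) ∧
  ∀ (x : ℝ → E d) (Fx : ℝ → (ℝ → E d) → (ℝ → E d) → E d), x 0 = x₀ →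
    (∃ y Fy, y 0 = y₀ ∧ InLambda D x y Fx Fy) →
    ∃ y Fy, y 0 = y₀ ∧ InLambda D x y Fx Fy ∧ 0 < evasionInf D x y

/-- A minimal geodesic in `cl D` from `v` to `z`, parametrized by arc length. -/
structure GeodesicIn (D : Set (E d)) (v z : E d) where
  toFun : ℝ → E d
  len : ℝ
  len_nonneg : 0 ≤ len
  contOn : ContinuousOn toFun (Icc 0 len)
  mem : ∀ t ∈ Icc (0:ℝ) len, toFun t ∈ closure D
  source : toFun 0 = v
  target : toFun len = z
  unitSpeed : ∀ s ∈ Icc (0:ℝ) len, eVariationOn toFun (Icc 0 s) = ENNReal.ofReal s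
  minimal : ENNReal.ofReal len = intrinsicDist D v z

abbrev E3 : Type := EuclideanSpace ℝ (Fin 3)

/-- Geodesic distance on the sphere of radius `1/√κ` in `ℝ³`. -/
def sphDistK (κ : ℝ) (u v : E3) : ℝ := (1 / Real.sqrt κ) * Real.arccos (κ * ⟪u, v⟫)

/-- Arc-length parametrization of the minimal great-circle arc from `u` to `v` on the sphere
of radius `1/√κ`. -/
def sphArcK (κ : ℝ) (u v : E3) (s : ℝ) : E3 :=
  if sphDistK κ u v = 0 then u
  else (Real.sin (Real.sqrt κ * (sphDistK κ u v - s)) /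
          Real.sin (Real.sqrt κ * sphDistK κ u v)) • u
     + (Real.sin (Real.sqrt κ * s) / Real.sin (Real.sqrt κ * sphDistK κ u v)) • v

/-- Comparison inequality for a pair of sides of a geodesic triangle against the corresponding
sides of a spherical comparison triangle. -/
def cmpPair (D : Set (E d)) {a b a' b' : E d} (γ : GeodesicIn D a b) (γ' : GeodesicIn D a' b')
    (κ : ℝ) (u v u' v' : E3) : Prop :=
  ∀ s ∈ Icc (0:ℝ) γ.len, ∀ t ∈ Icc (0:ℝ) γ'.len,
    intrinsicDist D (γ.toFun s) (γ'.toFun t) ≤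
      ENNReal.ofReal (sphDistK κ (sphArcK κ u v s) (sphArcK κ u' v' t))

/-- `cl D`, with the intrinsic distance, is a `CAT(κ)` space (`κ > 0`). -/
def IsCAT (κ : ℝ) (D : Set (E d)) : Prop :=
  (∀ v ∈ closure D, ∀ z ∈ closure D,
      intrinsicDist D v z < ENNReal.ofReal (Real.pi / Real.sqrt κ) →
      Nonempty (GeodesicIn D v z)) ∧
  (∀ p ∈ closure D, ∀ q ∈ closure D, ∀ r ∈ closure D,
    ∀ (γ₁ : GeodesicIn D p q) (γ₂ : GeodesicIn D q r) (γ₃ : GeodesicIn D r p),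
      γ₁.len + γ₂.len + γ₃.len < 2 * Real.pi / Real.sqrt κ →
      ∃ pt qt rt : E3, ‖pt‖ = 1 / Real.sqrt κ ∧ ‖qt‖ = 1 / Real.sqrt κ ∧
        ‖rt‖ = 1 / Real.sqrt κ ∧
        sphDistK κ pt qt = γ₁.len ∧ sphDistK κ qt rt = γ₂.len ∧ sphDistK κ rt pt = γ₃.len ∧
        cmpPair D γ₁ γ₁ κ pt qt pt qt ∧ cmpPair D γ₁ γ₂ κ pt qt qt rt ∧
        cmpPair D γ₁ γ₃ κ pt qt rt pt ∧ cmpPair D γ₂ γ₂ κ qt rt qt rt ∧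
        cmpPair D γ₂ γ₃ κ qt rt rt pt ∧ cmpPair D γ₃ γ₃ κ rt pt rt pt)

/-- There is a unique (minimal, arc-length parametrized) geodesic from `v` to `z` in `cl D`. -/
def UniqueGeodesic (D : Set (E d)) (v z : E d) : Prop :=
  ∃ γ : GeodesicIn D v z, ∀ γ' : GeodesicIn D v z, ∀ s ∈ Icc (0:ℝ) γ.len, γ'.toFun s = γ.toFun s

/-- `(x, y)` is a simple pursuit. -/
def SimplePursuit (D : Set (E d)) (x y : ℝ → E d) : Prop :=
  Admissible D x ∧ Admissible D y ∧
  (∀ t : ℝ, 0 ≤ t → x t ≠ y t → UniqueGeodesic D (x t) (y t)) ∧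
  (∀ᵐ t ∂(volume.restrict (Ici (0:ℝ))), x t ≠ y t →
      ∃ v, HasDerivAt x v t ∧ ‖v‖ = 1 ∧
        ∃ γ : GeodesicIn D (x t) (y t), HasDerivWithinAt γ.toFun v (Ici 0) 0) ∧
  (∀ t₀ : ℝ, 0 ≤ t₀ → x t₀ = y t₀ → ∀ t, t₀ ≤ t → x t = y t)

/-- `K` is a `k`-times broken geodesic loop. -/
def IsBrokenGeodesicLoop (D : Set (E d)) (K : Loop D) (k : ℕ) : Prop :=
  ∃ brk : Fin k → ℝ, StrictMono brk ∧ (∀ i, brk i ∈ Ico (0:ℝ) K.len) ∧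
    ∃ ρ > 0, ∀ a L : ℝ, 0 ≤ L → L ≤ K.len → L < ρ →
      (∀ i, ∀ m : ℤ, ¬ (a < brk i + m * K.len ∧ brk i + m * K.len < a + L)) →
      intrinsicDist D (K.toFun a) (K.toFun (a + L)) = ENNReal.ofReal L

/-- Orthogonal projection onto the first `j` coordinates of `ℝ^d`. -/
def proj (d j : ℕ) (w : E d) : E d :=
  (WithLp.equiv 2 (Fin d → ℝ)).symm fun k => if (k : ℕ) < j then w k else 0

/-- The pursuit vector field `χ^{(i)}` (where `i : Fin d` encodes the `1`-based coordinate
index `i+1`; `Π_{i-1}` is projection onto the first `i.val` coordinates, and the distinguished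
coordinate is `i` itself). -/
def chi (δ : ℝ) (i : Fin d) (x y : E d) : E d :=
  (WithLp.equiv 2 (Fin d → ℝ)).symm fun k =>
    if (k : ℕ) < (i : ℕ) then
      (min 1 (‖proj d (i : ℕ) (y - x)‖ / δ) * Real.sqrt (1 - δ ^ 2) /
          ‖proj d (i : ℕ) (y - x)‖) * (y k - x k)
    else if k = i then
      min 1 (|y i - x i| / δ) *
        Real.sqrt (1 - (min 1 (‖proj d (i : ℕ) (y - x)‖ / δ) * Real.sqrt (1 - δ ^ 2)) ^ 2) *
        Real.sign (y i - x i)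
    else 0

/-- The long open cuboid `D₂ = (-1/2,1/2)^{d-1} × (0,L)`. -/
def cuboid (d : ℕ) (L : ℝ) : Set (E d) :=
  {w | (∀ k : Fin d, (k : ℕ) < d - 1 → |w k| < 1/2) ∧
       ∀ k : Fin d, (k : ℕ) = d - 1 → 0 < w k ∧ w k < L}

/-- The closed cuboid `[-1/2,1/2]^{d-1} × [0,L]`, the closure of `D₂`. -/
def cuboidCl (d : ℕ) (L : ℝ) : Set (E d) :=
  {w | (∀ k : Fin d, (k : ℕ) < d - 1 → |w k| ≤ 1/2) ∧
       ∀ k : Fin d, (k : ℕ) = d - 1 → 0 ≤ w k ∧ w k ≤ L}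


section AuxiliaryLemmas
open Filter

set_option maxHeartbeats 1000000 in
/-- Core: Lipschitz function with a.e. derivative bounded above. -/
theorem lip_deriv_le {h : ℝ → ℝ} {C : NNReal} {a b c : ℝ} (hab : a ≤ b)
    (hlip : LipschitzOnWith C h (Icc a b))
    (hd : ∀ᵐ t ∂(volume : Measure ℝ), t ∈ Ioo a b → ∃ v, v ≤ c ∧ HasDerivAt h v t) :
    h b - h a ≤ c * (b - a) := by
  rcases eq_or_lt_of_le hab with rfl | hab'
  · simp
  have key : ∀ ε : ℝ, 0 < ε → h b - h a ≤ c * (b - a) + ε * (b - a) + ((C : ℝ) + |c|) * ε := by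
    intro ε hε
    -- null set of bad points
    set N : Set ℝ := {t | ¬ (t ∈ Ioo a b → ∃ v, v ≤ c ∧ HasDerivAt h v t)} with hN
    have hNnull : volume N = 0 := hd
    have hN'null : volume (N ∪ {a}) = 0 := by
      apply le_antisymm _ zero_le
      calc volume (N ∪ {a}) ≤ volume N + volume ({a} : Set ℝ) :=
            measure_union_le (μ := (volume : Measure ℝ)) N {a}
        _ = 0 := by rw [hNnull, Real.volume_singleton, add_zero]
    obtain ⟨U, hUN, hUopen, hUvol⟩ :=
      Set.exists_isOpen_lt_of_lt (N ∪ {a}) (ENNReal.ofReal ε)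
        (by rw [hN'null]; exact ENNReal.ofReal_pos.2 hε)
    have hUfin : volume U ≠ ⊤ := (hUvol.trans ENNReal.ofReal_lt_top).ne
    set φ : ℝ → ℝ := fun t => (volume (U ∩ Ioc a t)).toReal with hφ
    have hfin : ∀ t, volume (U ∩ Ioc a t) ≠ ⊤ :=
      fun t => ((measure_mono inter_subset_left).trans_lt (lt_top_iff_ne_top.2 hUfin)).ne
    have hφa : φ a = 0 := by simp [hφ]
    have hφmono : Monotone φ := by
      intro s t hst
      exact ENNReal.toReal_mono (hfin t) (measure_mono (inter_subset_inter_right _ (Ioc_subset_Ioc_right hst)))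
    have hφle : ∀ s t : ℝ, s ≤ t → φ t ≤ φ s + (t - s) := by
      intro s t hst
      have h1 : U ∩ Ioc a t ⊆ (U ∩ Ioc a s) ∪ Ioc s t := by
        intro w ⟨hwU, hwa, hwt⟩
        rcases le_or_gt w s with hw | hw
        · exact Or.inl ⟨hwU, hwa, hw⟩
        · exact Or.inr ⟨hw, hwt⟩
      have hle2 : volume ((U ∩ Ioc a s) ∪ Ioc s t) ≤ volume (U ∩ Ioc a s) + volume (Ioc s t) :=
        measure_union_le _ _
      have := (measure_mono h1).trans hle2
      have h2 : (volume (U ∩ Ioc a t)).toReal ≤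
          (volume (U ∩ Ioc a s) + volume (Ioc s t)).toReal := by
        apply ENNReal.toReal_mono _ this
        exact (ENNReal.add_ne_top.2 ⟨hfin s, by simp [Real.volume_Ioc]⟩)
      rw [ENNReal.toReal_add (hfin s) (by simp [Real.volume_Ioc]), Real.volume_Ioc,
        ENNReal.toReal_ofReal (by linarith)] at h2
      exact h2
    have hφge : ∀ s t : ℝ, a ≤ s → s ≤ t → Ioc s t ⊆ U → φ s + (t - s) ≤ φ t := by
      intro s t has hst hsub
      have hdisj : Disjoint (U ∩ Ioc a s) (Ioc s t) := by
        apply Set.disjoint_left.2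
        rintro w ⟨_, _, hws⟩ ⟨hws', _⟩
        exact absurd hws (not_le.2 hws')
      have hsub2 : (U ∩ Ioc a s) ∪ Ioc s t ⊆ U ∩ Ioc a t := by
        rintro w (⟨hwU, hwa, hws⟩ | ⟨hws, hwt⟩)
        · exact ⟨hwU, hwa, hws.trans hst⟩
        · exact ⟨hsub ⟨hws, hwt⟩, has.trans_lt hws, hwt⟩
      have hmm : volume ((U ∩ Ioc a s) ∪ Ioc s t) ≤ volume (U ∩ Ioc a t) := measure_mono hsub2
      rw [measure_union hdisj measurableSet_Ioc] at hmm
      have h2 := ENNReal.toReal_mono (hfin t) hmm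
      rw [ENNReal.toReal_add (hfin s) (by simp [Real.volume_Ioc]), Real.volume_Ioc,
        ENNReal.toReal_ofReal (by linarith)] at h2
      exact h2
    have hφcont : Continuous φ := by
      have : LipschitzWith 1 φ := by
        apply LipschitzWith.of_dist_le_mul
        intro s t
        rw [Real.dist_eq, Real.dist_eq, NNReal.coe_one, one_mul]
        rcases le_total s t with hst | hst
        · have h1 := hφle t s -- wrong direction; fix below
          have := hφle s t hst
          have := hφmono hst
          rw [abs_sub_comm, abs_of_nonneg (by linarith), abs_of_nonpos (by linarith)]
          linarith
        · have := hφle t s hst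
          have := hφmono hst
          rw [abs_of_nonneg (by linarith), abs_of_nonneg (by linarith)]
          linarith
      exact this.continuous
    set K : ℝ := (C : ℝ) + |c| with hK
    have hK0 : 0 ≤ K := by positivity
    set T : Set ℝ := {t | h t - h a ≤ (c + ε) * (t - a) + K * φ t} with hT
    have hTb : Icc a b ⊆ T := by
      apply IsClosed.Icc_subset_of_forall_exists_gt
      · -- closedness of T ∩ Icc a b
        have hψ : ContinuousOn (fun t => h t - h a - ((c + ε) * (t - a) + K * φ t)) (Icc a b) := by
          apply ContinuousOn.sub
          · exact (hlip.continuousOn).sub continuousOn_const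
          · exact Continuous.continuousOn (by continuity)
        have : T ∩ Icc a b = Icc a b ∩ (fun t => h t - h a - ((c + ε) * (t - a) + K * φ t)) ⁻¹' (Iic 0) := by
          ext t
          simp only [hT, mem_inter_iff, mem_setOf_eq, mem_preimage, mem_Iic, and_comm]
          constructor
          · rintro ⟨h1, h2⟩; exact ⟨h1, by linarith⟩
          · rintro ⟨h1, h2⟩; exact ⟨h1, by linarith⟩
        rw [this]
        exact hψ.preimage_isClosed_of_isClosed isClosed_Icc isClosed_Iic
      · simp [hT, hφa]
      · rintro x ⟨hxT, hxa, hxb⟩ y hy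
        by_cases hxU : x ∈ U
        · obtain ⟨r, hr, hball⟩ := Metric.isOpen_iff.1 hUopen x hxU
          set z : ℝ := min (min y b) (x + r / 2) with hz
          have hxz : x < z := by
            apply lt_min (lt_min hy hxb)
            linarith
          have hzb : z ≤ b := le_trans (min_le_left _ _) (min_le_right _ _)
          have hzy : z ≤ y := le_trans (min_le_left _ _) (min_le_left _ _)
          have hsub : Ioc x z ⊆ U := by
            intro w ⟨hw1, hw2⟩
            apply hball
            rw [Metric.mem_ball, Real.dist_eq, abs_of_pos (by linarith)]
            have : z ≤ x + r / 2 := min_le_right _ _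
            linarith
          have hlipxz : h z - h x ≤ (C : ℝ) * (z - x) := by
            have hdd := hlip.dist_le_mul z ⟨hxa.trans hxz.le, hzb⟩ x ⟨hxa, hxb.le⟩
            rw [Real.dist_eq, Real.dist_eq] at hdd
            have h2 : |z - x| = z - x := abs_of_pos (by linarith)
            rw [h2] at hdd
            have h1 : h z - h x ≤ |h z - h x| := le_abs_self _
            linarith
          refine ⟨z, ?_, hxz, hzy⟩
          have hφz := hφge x z (hxa) hxz.le hsub
          simp only [hT, mem_setOf_eq] at hxT ⊢
          have hCK : (C:ℝ) ≤ c + ε + K := by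
            have : -c ≤ |c| := neg_le_abs c
            simp only [hK]; linarith
          have hstep : (C:ℝ) * (z - x) ≤ (c + ε + K) * (z - x) :=
            mul_le_mul_of_nonneg_right hCK (by linarith)
          have hstep2 : K * (φ x + (z - x)) ≤ K * φ z := mul_le_mul_of_nonneg_left hφz hK0
          nlinarith [hstep, hstep2, hxT, hlipxz]
        · have hxN : x ∉ N ∪ {a} := fun hx => hxU (hUN hx)
          have hxa' : x ≠ a := fun h => hxN (Or.inr (by simp [h]))
          have hxIoo : x ∈ Ioo a b := ⟨lt_of_le_of_ne hxa (Ne.symm hxa'), hxb⟩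
          have hxNN : x ∉ N := fun h => hxN (Or.inl h)
          simp only [hN, mem_setOf_eq, not_not] at hxNN
          obtain ⟨v, hvc, hv⟩ := hxNN hxIoo
          have hslope := hasDerivAt_iff_tendsto_slope.1 hv
          have hslope' : Tendsto (slope h x) (nhdsWithin x (Ioi x)) (nhds v) :=
            hslope.mono_left (nhdsWithin_mono _ (fun w hw => ne_of_gt hw))
          have hev : ∀ᶠ w in nhdsWithin x (Ioi x), slope h x w < c + ε :=
            hslope'.eventually_lt_const (by linarith)
          have hev2 : Ioo x (min y b) ∈ nhdsWithin x (Ioi x) :=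
            Ioo_mem_nhdsGT_of_mem ⟨le_refl x, lt_min hy hxb⟩
          obtain ⟨z, hz1, hz3⟩ := (hev.and (eventually_of_mem hev2 (fun w hw => hw))).exists
          have hxz : x < z := hz3.1
          have hzy : z ≤ y := (hz3.2.trans_le (min_le_left _ _)).le
          have hzb : z ≤ b := (hz3.2.trans_le (min_le_right _ _)).le
          refine ⟨z, ?_, hxz, hzy⟩
          have hzx : h z - h x < (c + ε) * (z - x) := by
            rw [slope_def_field, div_lt_iff₀ (by linarith)] at hz1
            linarith [hz1]
          simp only [hT, mem_setOf_eq] at hxT ⊢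
          have hφm := hφmono hxz.le
          nlinarith
    have hb := hTb ⟨le_refl a |>.trans hab, le_refl b⟩
    simp only [hT, mem_setOf_eq] at hb
    have hφb : φ b ≤ ε := by
      have : volume (U ∩ Ioc a b) ≤ ENNReal.ofReal ε :=
        le_trans (measure_mono inter_subset_left) hUvol.le
      calc φ b ≤ (ENNReal.ofReal ε).toReal := ENNReal.toReal_mono (by simp) this
        _ = ε := ENNReal.toReal_ofReal hε.le
    have hKφ := mul_le_mul_of_nonneg_left hφb hK0
    nlinarith [hb, hKφ]
  -- conclude
  by_contra hcon
  push_neg at hcon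
  set η := h b - h a - c * (b - a) with hη
  have hη0 : 0 < η := by linarith
  set Kd : ℝ := (b - a) + ((C : ℝ) + |c|) + 1 with hKd
  have hKd0 : 0 < Kd := by
    have := abs_nonneg c
    have := C.coe_nonneg
    simp only [hKd]; linarith
  have hε : 0 < η / Kd := div_pos hη0 hKd0
  have := key _ hε
  have h1 : (η / Kd) * (b - a) + ((C : ℝ) + |c|) * (η / Kd) < η := by
    rw [div_mul_eq_mul_div, mul_div_assoc', ← add_div, div_lt_iff₀ hKd0]
    have hC : (0:ℝ) ≤ (C : ℝ) + |c| := by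
      have := abs_nonneg c; have := C.coe_nonneg; linarith
    nlinarith [hη0, hab'.le]
  linarith

theorem lip_deriv_ge {h : ℝ → ℝ} {C : NNReal} {a b c : ℝ} (hab : a ≤ b)
    (hlip : LipschitzOnWith C h (Icc a b))
    (hd : ∀ᵐ t ∂(volume : Measure ℝ), t ∈ Ioo a b → ∃ v, c ≤ v ∧ HasDerivAt h v t) :
    c * (b - a) ≤ h b - h a := by
  have hlipneg : LipschitzOnWith C (fun t => -h t) (Icc a b) := by
    intro s hs t ht
    simpa [edist_neg_neg] using hlip hs ht
  have hdneg : ∀ᵐ t ∂(volume : Measure ℝ), t ∈ Ioo a b →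
      ∃ v, v ≤ -c ∧ HasDerivAt (fun t => -h t) v t := by
    filter_upwards [hd] with t ht hmem
    obtain ⟨v, hv1, hv2⟩ := ht hmem
    exact ⟨-v, by linarith, hv2.neg⟩
  have := lip_deriv_le hab hlipneg hdneg
  linarith

theorem proj_apply' (d j : ℕ) (w : E d) (k : Fin d) :
    proj d j w k = if (k : ℕ) < j then w k else 0 := rfl

theorem proj_neg (d j : ℕ) (w : E d) : proj d j (-w) = -proj d j w := by
  ext k
  simp only [proj_apply', PiLp.neg_apply]
  split <;> simp

theorem proj_sub (d j : ℕ) (w v : E d) : proj d j (w - v) = proj d j w - proj d j v := by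
  ext k
  simp only [proj_apply', PiLp.sub_apply]
  split <;> simp

def projCLM (d j : ℕ) : E d →L[ℝ] E d :=
  LinearMap.toContinuousLinearMap
    { toFun := proj d j
      map_add' := by
        intro a b
        ext k
        simp only [proj_apply', PiLp.add_apply]
        split <;> simp
      map_smul' := by
        intro c a
        ext k
        simp only [proj_apply', PiLp.smul_apply, RingHom.id_apply, smul_eq_mul]
        split <;> simp }

theorem projCLM_apply (d j : ℕ) (w : E d) : projCLM d j w = proj d j w := rfl

theorem coord_abs_le_norm (w : E d) (k : Fin d) : |w k| ≤ ‖w‖ := by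
  rw [EuclideanSpace.norm_eq]
  rw [← Real.sqrt_sq_eq_abs]
  apply Real.sqrt_le_sqrt
  have := Finset.single_le_sum (f := fun j : Fin d => ‖w j‖ ^ 2)
    (fun j _ => by positivity) (Finset.mem_univ k)
  simpa [Real.norm_eq_abs, sq_abs] using this

theorem norm_proj_le (d j : ℕ) (w : E d) : ‖proj d j w‖ ≤ ‖w‖ := by
  rw [EuclideanSpace.norm_eq, EuclideanSpace.norm_eq]
  apply Real.sqrt_le_sqrt
  apply Finset.sum_le_sum
  intro k _
  rw [proj_apply']
  split <;> simp [Real.norm_eq_abs] <;> positivity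

theorem chi_apply (δ : ℝ) (i : Fin d) (x y : E d) (k : Fin d) :
    chi δ i x y k =
    (if (k : ℕ) < (i : ℕ) then
      (min 1 (‖proj d (i : ℕ) (y - x)‖ / δ) * Real.sqrt (1 - δ ^ 2) /
          ‖proj d (i : ℕ) (y - x)‖) * (y k - x k)
    else if k = i then
      min 1 (|y i - x i| / δ) *
        Real.sqrt (1 - (min 1 (‖proj d (i : ℕ) (y - x)‖ / δ) * Real.sqrt (1 - δ ^ 2)) ^ 2) *
        Real.sign (y i - x i)
    else 0) := rfl

theorem chi_apply_self (δ : ℝ) (i : Fin d) (x y : E d) :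
    chi δ i x y i =
      min 1 (|y i - x i| / δ) *
        Real.sqrt (1 - (min 1 (‖proj d (i : ℕ) (y - x)‖ / δ) * Real.sqrt (1 - δ ^ 2)) ^ 2) *
        Real.sign (y i - x i) := by
  rw [chi_apply]
  simp

theorem abs_real_sign (r : ℝ) : |Real.sign r| ≤ 1 := by
  rcases lt_trichotomy r 0 with h | h | h
  · rw [Real.sign_of_neg h]; norm_num
  · rw [h, Real.sign_zero]; norm_num
  · rw [Real.sign_of_pos h]; norm_num

theorem abs_chi_apply_self_le_one {δ : ℝ} (hδ0 : 0 < δ) (i : Fin d) (x y : E d) :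
    |chi δ i x y i| ≤ 1 := by
  rw [chi_apply_self, abs_mul, abs_mul]
  have h1 : |min 1 (|y i - x i| / δ)| ≤ 1 := by
    rw [abs_of_nonneg (le_min zero_le_one (by positivity))]
    exact min_le_left _ _
  have h2 : |Real.sqrt (1 - (min 1 (‖proj d (i : ℕ) (y - x)‖ / δ) * Real.sqrt (1 - δ ^ 2)) ^ 2)| ≤ 1 := by
    rw [abs_of_nonneg (Real.sqrt_nonneg _)]
    have hh : Real.sqrt (1 - (min 1 (‖proj d (i : ℕ) (y - x)‖ / δ) * Real.sqrt (1 - δ ^ 2)) ^ 2) ≤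
        Real.sqrt 1 := Real.sqrt_le_sqrt
      (by nlinarith [sq_nonneg (min 1 (‖proj d (i : ℕ) (y - x)‖ / δ) * Real.sqrt (1 - δ ^ 2))])
    simpa using hh
  calc |min 1 (|y i - x i| / δ)| * _ * |Real.sign (y i - x i)|
      ≤ 1 * 1 * 1 := by
        apply mul_le_mul (mul_le_mul h1 h2 (abs_nonneg _) (by norm_num)) (abs_real_sign _)
          (abs_nonneg _) (by norm_num)
    _ = 1 := by norm_num

theorem chi_apply_self_of_gap {δ : ℝ} (hδ0 : 0 < δ) (hδ1 : δ < 1) (i : Fin d) (x y : E d)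
    (hgap : δ < y i - x i) :
    δ ≤ chi δ i x y i ∧ chi δ i x y i ≤ 1 := by
  have habs : |y i - x i| = y i - x i := abs_of_pos (by linarith)
  have hmin : min 1 (|y i - x i| / δ) = 1 := by
    apply min_eq_left
    rw [habs, le_div_iff₀ hδ0, one_mul]
    linarith
  have hsign : Real.sign (y i - x i) = 1 := Real.sign_of_pos (by linarith)
  set c₀ : ℝ := min 1 (‖proj d (i : ℕ) (y - x)‖ / δ) * Real.sqrt (1 - δ ^ 2) with hc₀
  have heq : chi δ i x y i = Real.sqrt (1 - c₀ ^ 2) := by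
    rw [chi_apply_self, hmin, hsign, one_mul, mul_one]
  have hc₀0 : 0 ≤ c₀ := by
    apply mul_nonneg (le_min zero_le_one (by positivity)) (Real.sqrt_nonneg _)
  have hc₀le : c₀ ≤ Real.sqrt (1 - δ ^ 2) := by
    rw [hc₀]
    calc min 1 (‖proj d (i : ℕ) (y - x)‖ / δ) * Real.sqrt (1 - δ ^ 2)
        ≤ 1 * Real.sqrt (1 - δ ^ 2) :=
          mul_le_mul_of_nonneg_right (min_le_left _ _) (Real.sqrt_nonneg _)
      _ = Real.sqrt (1 - δ ^ 2) := one_mul _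
  have hsq : c₀ ^ 2 ≤ 1 - δ ^ 2 := by
    have := Real.sq_sqrt (by nlinarith : (0:ℝ) ≤ 1 - δ ^ 2)
    nlinarith [hc₀0, hc₀le]
  refine ⟨?_, ?_⟩
  · rw [heq]
    calc δ = Real.sqrt (δ ^ 2) := by rw [Real.sqrt_sq hδ0.le]
      _ ≤ Real.sqrt (1 - c₀ ^ 2) := Real.sqrt_le_sqrt (by linarith)
  · rw [heq]
    have hh : Real.sqrt (1 - c₀ ^ 2) ≤ Real.sqrt 1 :=
      Real.sqrt_le_sqrt (by nlinarith [sq_nonneg c₀])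
    simpa using hh

theorem proj_chi (δ : ℝ) (i : Fin d) (x y : E d) :
    proj d (i : ℕ) (chi δ i x y) =
      (min 1 (‖proj d (i : ℕ) (y - x)‖ / δ) * Real.sqrt (1 - δ ^ 2) /
        ‖proj d (i : ℕ) (y - x)‖) • proj d (i : ℕ) (y - x) := by
  ext k
  simp only [proj_apply', PiLp.smul_apply, smul_eq_mul, chi_apply]
  rcases lt_or_ge (k : ℕ) (i : ℕ) with h | h
  · rw [if_pos h, if_pos h, if_pos h, PiLp.sub_apply]
  · rw [if_neg (not_lt.2 h), if_neg (not_lt.2 h), mul_zero]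

theorem inner_proj_chi {δ : ℝ} (hδ0 : 0 < δ) (i : Fin d) (x y : E d)
    (hf : δ ≤ ‖proj d (i : ℕ) (y - x)‖) :
    ⟪proj d (i : ℕ) (x - y), proj d (i : ℕ) (chi δ i x y)⟫ =
      -(Real.sqrt (1 - δ ^ 2) * ‖proj d (i : ℕ) (y - x)‖) := by
  have hfpos : 0 < ‖proj d (i : ℕ) (y - x)‖ := lt_of_lt_of_le hδ0 hf
  have hmin : min 1 (‖proj d (i : ℕ) (y - x)‖ / δ) = 1 := by
    apply min_eq_left
    rw [le_div_iff₀ hδ0, one_mul]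
    exact hf
  have hneg : proj d (i : ℕ) (y - x) = -proj d (i : ℕ) (x - y) := by
    rw [← proj_neg, neg_sub]
  have h0 : ‖proj d (i : ℕ) (x - y)‖ ≠ 0 := by
    rw [show proj d (i : ℕ) (x - y) = -proj d (i : ℕ) (y - x) from by rw [← proj_neg, neg_sub]]
    simpa using hfpos.ne'
  rw [proj_chi, hmin, one_mul, real_inner_smul_right, hneg, inner_neg_right,
    real_inner_self_eq_norm_sq, norm_neg]
  field_simp

theorem coord_lip {C : NNReal} {x : ℝ → E d} (hC : LipschitzOnWith C x (Ici 0))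
    (i : Fin d) {a b : ℝ} (ha : 0 ≤ a) :
    LipschitzOnWith C (fun t => x t i) (Icc a b) := by
  rw [lipschitzOnWith_iff_dist_le_mul]
  intro s hs t ht
  calc dist (x s i) (x t i) = |x s i - x t i| := Real.dist_eq _ _
    _ = |(x s - x t) i| := by rw [PiLp.sub_apply]
    _ ≤ ‖x s - x t‖ := coord_abs_le_norm _ _
    _ = dist (x s) (x t) := (dist_eq_norm _ _).symm
    _ ≤ C * dist s t := hC.dist_le_mul s (ha.trans hs.1) t (ha.trans ht.1)

theorem xcoord_growth {δ : ℝ} (hδ0 : 0 < δ) (hδ1 : δ < 1) {i : Fin d}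
    {x y : ℝ → E d} {Cx : NNReal} (hCx : LipschitzOnWith Cx x (Ici 0))
    (hx' : ∀ᵐ t ∂(volume : Measure ℝ), 0 ≤ t → HasDerivAt x (chi δ i (x t) (y t)) t)
    {a b : ℝ} (ha : 0 ≤ a) (hab : a ≤ b)
    (hgap : ∀ s ∈ Ioo a b, δ < y s i - x s i) :
    δ * (b - a) ≤ x b i - x a i := by
  apply lip_deriv_ge hab (coord_lip hCx i ha)
  filter_upwards [hx'] with t hx ht
  have h0t : 0 ≤ t := le_of_lt (lt_of_le_of_lt ha ht.1)
  have hd := hx h0t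
  have hD0 := (EuclideanSpace.proj (𝕜 := ℝ) i).hasFDerivAt.comp_hasDerivAt t hd
  have hD : HasDerivAt (fun s => x s i) (chi δ i (x t) (y t) i) t := hD0
  obtain ⟨hlow, -⟩ := chi_apply_self_of_gap hδ0 hδ1 i (x t) (y t) (hgap t ht)
  exact ⟨_, hlow, hD⟩

theorem f_lip {x y : ℝ → E d} {Cx Cy : NNReal}
    (hCx : LipschitzOnWith Cx x (Ici 0)) (hCy : LipschitzOnWith Cy y (Ici 0))
    (j : ℕ) {a b : ℝ} (ha : 0 ≤ a) :
    LipschitzOnWith (Cx + Cy) (fun t => ‖proj d j (x t - y t)‖) (Icc a b) := by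
  rw [lipschitzOnWith_iff_dist_le_mul]
  intro s hs t ht
  have hs0 : (0:ℝ) ≤ s := ha.trans hs.1
  have ht0 : (0:ℝ) ≤ t := ha.trans ht.1
  have h1 : dist ‖proj d j (x s - y s)‖ ‖proj d j (x t - y t)‖ ≤
      ‖proj d j (x s - y s) - proj d j (x t - y t)‖ := by
    rw [Real.dist_eq]
    exact abs_norm_sub_norm_le _ _
  have h2 : proj d j (x s - y s) - proj d j (x t - y t) =
      proj d j ((x s - x t) - (y s - y t)) := by
    simp only [proj_sub]
    abel
  have h3 : ‖proj d j ((x s - x t) - (y s - y t))‖ ≤ ‖x s - x t‖ + ‖y s - y t‖ :=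
    le_trans (norm_proj_le _ _ _) (norm_sub_le _ _)
  have h4 : ‖x s - x t‖ ≤ (Cx : ℝ) * dist s t := by
    rw [← dist_eq_norm]
    exact hCx.dist_le_mul s hs0 t ht0
  have h5 : ‖y s - y t‖ ≤ (Cy : ℝ) * dist s t := by
    rw [← dist_eq_norm]
    exact hCy.dist_le_mul s hs0 t ht0
  calc dist ‖proj d j (x s - y s)‖ ‖proj d j (x t - y t)‖
      ≤ ‖x s - x t‖ + ‖y s - y t‖ := by rw [h2] at h1; linarith [h1, h3]
    _ ≤ (Cx : ℝ) * dist s t + (Cy : ℝ) * dist s t := by linarith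
    _ = ((Cx + Cy : NNReal) : ℝ) * dist s t := by push_cast; ring

theorem one_sub_sqrt_le {δ : ℝ} (hδ0 : 0 < δ) (hδ1 : δ < 1) :
    1 - Real.sqrt (1 - δ ^ 2) ≤ δ ^ 2 := by
  have h1 : (0:ℝ) ≤ 1 - δ ^ 2 := by nlinarith
  have h2 : 1 - δ ^ 2 ≤ Real.sqrt (1 - δ ^ 2) := by
    calc 1 - δ ^ 2 = Real.sqrt ((1 - δ ^ 2) ^ 2) := (Real.sqrt_sq h1).symm
      _ ≤ Real.sqrt (1 - δ ^ 2) := Real.sqrt_le_sqrt (by nlinarith)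
  linarith

theorem f_decay {δ : ℝ} (hδ0 : 0 < δ) (hδ1 : δ < 1) {i : Fin d}
    {x y : ℝ → E d} {Cx Cy : NNReal}
    (hCx : LipschitzOnWith Cx x (Ici 0)) (hCy : LipschitzOnWith Cy y (Ici 0))
    (hx' : ∀ᵐ t ∂(volume : Measure ℝ), 0 ≤ t → HasDerivAt x (chi δ i (x t) (y t)) t)
    (hy' : ∀ᵐ t ∂(volume : Measure ℝ), 0 ≤ t → ∀ v, HasDerivAt y v t → ‖v‖ ≤ 1)
    {a b : ℝ} (ha : 0 ≤ a) (hab : a ≤ b)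
    (hfge : ∀ s ∈ Ioo a b, δ ≤ ‖proj d (i : ℕ) (x s - y s)‖) :
    ‖proj d (i : ℕ) (x b - y b)‖ - ‖proj d (i : ℕ) (x a - y a)‖ ≤ δ ^ 2 * (b - a) := by
  apply lip_deriv_le hab (f_lip hCx hCy (i : ℕ) ha)
  filter_upwards [hx', hy',
    hCy.ae_differentiableWithinAt_of_mem (μ := (volume : Measure ℝ))] with t hx hy hyD ht
  have h0t : 0 < t := lt_of_le_of_lt ha ht.1
  have hyA : DifferentiableAt ℝ y t := (hyD (mem_Ici.2 h0t.le)).differentiableAt (Ici_mem_nhds h0t)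
  have hyd : HasDerivAt y (deriv y t) t := hyA.hasDerivAt
  have hvy : ‖deriv y t‖ ≤ 1 := hy h0t.le _ hyd
  have hxd := hx h0t.le
  have hw : HasDerivAt (fun s => x s - y s) (chi δ i (x t) (y t) - deriv y t) t := hxd.sub hyd
  have hz : HasDerivAt (fun s => proj d (i : ℕ) (x s - y s))
      (proj d (i : ℕ) (chi δ i (x t) (y t) - deriv y t)) t := by
    have := (projCLM d (i : ℕ)).hasFDerivAt.comp_hasDerivAt t hw
    exact this
  have hq : HasDerivAt (fun s => (⟪proj d (i : ℕ) (x s - y s), proj d (i : ℕ) (x s - y s)⟫ : ℝ))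
      (⟪proj d (i : ℕ) (x t - y t), proj d (i : ℕ) (chi δ i (x t) (y t) - deriv y t)⟫ +
       ⟪proj d (i : ℕ) (chi δ i (x t) (y t) - deriv y t), proj d (i : ℕ) (x t - y t)⟫) t :=
    hz.inner ℝ hz
  have hft : δ ≤ ‖proj d (i : ℕ) (x t - y t)‖ := hfge t ht
  have hz0 : (0:ℝ) < ‖proj d (i : ℕ) (x t - y t)‖ := lt_of_lt_of_le hδ0 hft
  have hqt : (⟪proj d (i : ℕ) (x t - y t), proj d (i : ℕ) (x t - y t)⟫ : ℝ) ≠ 0 := by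
    rw [real_inner_self_eq_norm_sq]
    positivity
  have hsqrt : HasDerivAt (fun s => Real.sqrt
      (⟪proj d (i : ℕ) (x s - y s), proj d (i : ℕ) (x s - y s)⟫ : ℝ))
      (1 / (2 * Real.sqrt (⟪proj d (i : ℕ) (x t - y t), proj d (i : ℕ) (x t - y t)⟫ : ℝ)) *
        (⟪proj d (i : ℕ) (x t - y t), proj d (i : ℕ) (chi δ i (x t) (y t) - deriv y t)⟫ +
         ⟪proj d (i : ℕ) (chi δ i (x t) (y t) - deriv y t), proj d (i : ℕ) (x t - y t)⟫)) t :=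
    (Real.hasDerivAt_sqrt hqt).comp t hq
  have hfeq : (fun s : ℝ => Real.sqrt
      (⟪proj d (i : ℕ) (x s - y s), proj d (i : ℕ) (x s - y s)⟫ : ℝ)) =
      (fun s : ℝ => ‖proj d (i : ℕ) (x s - y s)‖) := by
    funext s
    rw [real_inner_self_eq_norm_mul_norm, Real.sqrt_mul_self (norm_nonneg _)]
  rw [hfeq] at hsqrt
  refine ⟨_, ?_, hsqrt⟩
  -- now bound the derivative value
  have hsq_eq : Real.sqrt (⟪proj d (i : ℕ) (x t - y t), proj d (i : ℕ) (x t - y t)⟫ : ℝ) =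
      ‖proj d (i : ℕ) (x t - y t)‖ := by
    rw [real_inner_self_eq_norm_mul_norm, Real.sqrt_mul_self (norm_nonneg _)]
  have hzz' : (⟪proj d (i : ℕ) (x t - y t), proj d (i : ℕ) (chi δ i (x t) (y t) - deriv y t)⟫ : ℝ)
      ≤ ‖proj d (i : ℕ) (x t - y t)‖ * (δ ^ 2) := by
    rw [show proj d (i : ℕ) (chi δ i (x t) (y t) - deriv y t) =
      proj d (i : ℕ) (chi δ i (x t) (y t)) - proj d (i : ℕ) (deriv y t) from
      proj_sub _ _ _ _]
    rw [inner_sub_right (𝕜 := ℝ)]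
    have hnorm_eq : ‖proj d (i : ℕ) (y t - x t)‖ = ‖proj d (i : ℕ) (x t - y t)‖ := by
      rw [show proj d (i : ℕ) (y t - x t) = -proj d (i : ℕ) (x t - y t) from by
        rw [← proj_neg, neg_sub], norm_neg]
    have h1 : (⟪proj d (i : ℕ) (x t - y t), proj d (i : ℕ) (chi δ i (x t) (y t))⟫ : ℝ) =
        -(Real.sqrt (1 - δ ^ 2) * ‖proj d (i : ℕ) (x t - y t)‖) := by
      rw [inner_proj_chi hδ0 i (x t) (y t) (by rw [hnorm_eq]; exact hft), hnorm_eq]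
    have h2 : |(⟪proj d (i : ℕ) (x t - y t), proj d (i : ℕ) (deriv y t)⟫ : ℝ)| ≤
        ‖proj d (i : ℕ) (x t - y t)‖ := by
      calc |(⟪proj d (i : ℕ) (x t - y t), proj d (i : ℕ) (deriv y t)⟫ : ℝ)|
          ≤ ‖proj d (i : ℕ) (x t - y t)‖ * ‖proj d (i : ℕ) (deriv y t)‖ :=
            abs_real_inner_le_norm _ _
        _ ≤ ‖proj d (i : ℕ) (x t - y t)‖ * 1 := by
            apply mul_le_mul_of_nonneg_left _ (norm_nonneg _)
            exact le_trans (norm_proj_le _ _ _) hvy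
        _ = ‖proj d (i : ℕ) (x t - y t)‖ := mul_one _
    have h3 := one_sub_sqrt_le hδ0 hδ1
    have h4 : -(⟪proj d (i : ℕ) (x t - y t), proj d (i : ℕ) (deriv y t)⟫ : ℝ) ≤
        ‖proj d (i : ℕ) (x t - y t)‖ := by
      have := neg_abs_le (⟪proj d (i : ℕ) (x t - y t), proj d (i : ℕ) (deriv y t)⟫ : ℝ)
      linarith [h2]
    rw [h1]
    nlinarith [hz0]
  rw [hsq_eq, real_inner_comm (proj d (i : ℕ) (chi δ i (x t) (y t) - deriv y t))
    (proj d (i : ℕ) (x t - y t))]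
  rw [div_mul_eq_mul_div, one_mul, div_le_iff₀ (by positivity)]
  have hcomm : (⟪proj d (i : ℕ) (chi δ i (x t) (y t) - deriv y t), proj d (i : ℕ) (x t - y t)⟫ : ℝ)
      = ⟪proj d (i : ℕ) (x t - y t), proj d (i : ℕ) (chi δ i (x t) (y t) - deriv y t)⟫ :=
    real_inner_comm _ _
  nlinarith [hzz', hz0, sq_nonneg δ, hcomm]

-- appended to aux3 environment for testing
theorem statement9_aux (L δ : ℝ) (hL : 0 < L) (hδ0 : 0 < δ) (hδ1 : δ < 1)
    (i : Fin d) (x y : ℝ → E d) {Cx Cy : NNReal}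
    (hCx : LipschitzOnWith Cx x (Ici 0)) (hCy : LipschitzOnWith Cy y (Ici 0))
    (hx0d : 0 < x 0 i) (hxy0 : x 0 i ≤ y 0 i)
    (hy' : ∀ᵐ t ∂(volume : Measure ℝ), 0 ≤ t → ∀ v, HasDerivAt y v t → ‖v‖ ≤ 1)
    (hx' : ∀ᵐ t ∂(volume : Measure ℝ), 0 ≤ t → HasDerivAt x (chi δ i (x t) (y t)) t)
    (hyL : ∀ t : ℝ, 0 ≤ t → y t i ≤ L) :
    ∃ u : ℝ, 0 ≤ u ∧ |x u i - y u i| ≤ δ ∧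
      (∀ s : ℝ, 0 ≤ s → s < u → δ < |x s i - y s i|) ∧
      u ≤ L / δ ∧
      ‖proj d (i : ℕ) (x u - y u)‖ ≤ ‖proj d (i : ℕ) (x 0 - y 0)‖ + (L + 1) * δ ∧
      ∀ t : ℝ, 0 ≤ t → t ≤ u →
        x 0 i ≤ x t i ∧ x t i ≤ y t i := by
  by_cases hg0 : y 0 i - x 0 i ≤ δ
  · refine ⟨0, le_refl 0, ?_, ?_, by positivity, ?_, ?_⟩
    · rw [abs_sub_comm, abs_of_nonneg (by linarith)]
      linarith
    · intro s h1 h2; linarith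
    · nlinarith [norm_nonneg (proj d (i : ℕ) (x 0 - y 0))]
    · intro t h1 h2
      have ht0 : t = 0 := le_antisymm h2 h1
      subst ht0
      exact ⟨le_refl _, hxy0⟩
  push_neg at hg0
  -- continuity of coordinates on Ici 0
  have hYc : ContinuousOn (fun t => y t i) (Ici 0) := by
    have := (EuclideanSpace.proj (𝕜 := ℝ) i).continuous.comp_continuousOn hCy.continuousOn
    exact this
  have hXc : ContinuousOn (fun t => x t i) (Ici 0) := by
    have := (EuclideanSpace.proj (𝕜 := ℝ) i).continuous.comp_continuousOn hCx.continuousOn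
    exact this
  have hgc : ContinuousOn (fun t => y t i - x t i) (Ici 0) := hYc.sub hXc
  -- growth of the i-th coordinate of x
  have hgrow : ∀ a b : ℝ, 0 ≤ a → a ≤ b → (∀ s ∈ Ioo a b, δ < y s i - x s i) →
      δ * (b - a) ≤ x b i - x a i :=
    fun a b ha hab hgap => xcoord_growth hδ0 hδ1 hCx hx' ha hab hgap
  -- the hitting set is nonempty
  have hSne : ∃ t : ℝ, 0 ≤ t ∧ y t i - x t i ≤ δ := by
    by_contra hno
    push_neg at hno
    set b : ℝ := L / δ + 1 with hb
    have hb0 : (0:ℝ) ≤ b := by positivity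
    have h1 := hgrow 0 b le_rfl hb0 (fun s hs => hno s hs.1.le)
    have h2 : x b i ≤ y b i := by have := hno b hb0; linarith
    have h3 := hyL b hb0
    have h4 : δ * b = L + δ := by rw [hb]; field_simp
    have h1' : δ * b ≤ x b i - x 0 i := by
      have : δ * (b - 0) = δ * b := by ring
      linarith [h1, this.symm.le]
    linarith
  set S : Set ℝ := {t : ℝ | 0 ≤ t ∧ y t i - x t i ≤ δ} with hS
  have hSc : IsClosed S := by
    have hSeq : S = Ici 0 ∩ (fun t => y t i - x t i) ⁻¹' (Iic δ) := by
      ext t; exact Iff.rfl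
    rw [hSeq]
    exact hgc.preimage_isClosed_of_isClosed isClosed_Ici isClosed_Iic
  have hbdd : BddBelow S := ⟨0, fun t ht => ht.1⟩
  set u : ℝ := sInf S with hu
  have huS : u ∈ S := hSc.csInf_mem hSne hbdd
  have hu0 : 0 ≤ u := huS.1
  have hguδ : y u i - x u i ≤ δ := huS.2
  have hbefore : ∀ s : ℝ, 0 ≤ s → s < u → δ < y s i - x s i := by
    intro s h1 h2
    by_contra hc
    push_neg at hc
    exact absurd (csInf_le hbdd ⟨h1, hc⟩) (not_le.2 h2)
  have hu_pos : 0 < u := by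
    rcases eq_or_lt_of_le hu0 with h | h
    · exact absurd hguδ (by rw [← h]; exact not_le.2 hg0)
    · exact h
  have hgu_ge : δ ≤ y u i - x u i := by
    have hcg : ContinuousAt (fun t => y t i - x t i) u :=
      hgc.continuousAt (Ici_mem_nhds hu_pos)
    apply ge_of_tendsto (hcg.tendsto.mono_left (nhdsWithin_le_nhds (s := Iio u)))
    filter_upwards [Ioo_mem_nhdsLT_of_mem (⟨hu_pos, le_refl u⟩ : u ∈ Ioc 0 u)] with s hs
    exact (hbefore s hs.1.le hs.2).le
  have hgu : y u i - x u i = δ := le_antisymm hguδ hgu_ge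
  have huLδ : u ≤ L / δ := by
    have h1 := hgrow 0 u le_rfl hu0 (fun s hs => hbefore s hs.1.le hs.2)
    have h2 : x u i ≤ y u i := by linarith
    have h3 := hyL u hu0
    rw [le_div_iff₀ hδ0]
    nlinarith [hx0d]
  -- the projection bound
  have hfbound : ‖proj d (i : ℕ) (x u - y u)‖ ≤ ‖proj d (i : ℕ) (x 0 - y 0)‖ + (L + 1) * δ := by
    have hδu : δ ^ 2 * u ≤ δ * L := by
      have h1 : δ ^ 2 * u ≤ δ ^ 2 * (L / δ) :=
        mul_le_mul_of_nonneg_left huLδ (sq_nonneg δ)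
      have h2 : δ ^ 2 * (L / δ) = δ * L := by field_simp
      linarith
    by_cases hfu : ‖proj d (i : ℕ) (x u - y u)‖ ≤ δ
    · nlinarith [norm_nonneg (proj d (i : ℕ) (x 0 - y 0)), hδ0.le, hL.le]
    push_neg at hfu
    have hfc : ContinuousOn (fun t => ‖proj d (i : ℕ) (x t - y t)‖) (Icc 0 u) :=
      (f_lip hCx hCy (i : ℕ) le_rfl).continuousOn
    by_cases hS2 : ∃ s : ℝ, s ∈ Icc 0 u ∧ ‖proj d (i : ℕ) (x s - y s)‖ ≤ δ
    · obtain ⟨s₀, hs₀⟩ := hS2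
      set S2 : Set ℝ := {s : ℝ | s ∈ Icc 0 u ∧ ‖proj d (i : ℕ) (x s - y s)‖ ≤ δ} with hS2d
      have hS2c : IsClosed S2 := by
        have hSeq : S2 = Icc 0 u ∩ (fun t => ‖proj d (i : ℕ) (x t - y t)‖) ⁻¹' (Iic δ) := by
          ext t; exact Iff.rfl
        rw [hSeq]
        exact hfc.preimage_isClosed_of_isClosed isClosed_Icc isClosed_Iic
      have hbdd2 : BddAbove S2 := ⟨u, fun s hs => hs.1.2⟩
      set τ : ℝ := sSup S2 with hτ
      have hτS : τ ∈ S2 := hS2c.csSup_mem ⟨s₀, hs₀⟩ hbdd2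
      have hτu : τ ≤ u := hτS.1.2
      have hτ0 : 0 ≤ τ := hτS.1.1
      have hafter : ∀ s : ℝ, τ < s → s ≤ u → δ < ‖proj d (i : ℕ) (x s - y s)‖ := by
        intro s h1 h2
        by_contra hc
        push_neg at hc
        exact absurd (le_csSup hbdd2 ⟨⟨hτ0.trans h1.le, h2⟩, hc⟩) (not_le.2 h1)
      have hdecay := f_decay hδ0 hδ1 hCx hCy hx' hy' hτ0 hτu
        (fun s hs => (hafter s hs.1 hs.2.le).le)
      have hmul : δ ^ 2 * (u - τ) ≤ δ ^ 2 * u :=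
        mul_le_mul_of_nonneg_left (by linarith) (sq_nonneg δ)
      nlinarith [hτS.2, norm_nonneg (proj d (i : ℕ) (x 0 - y 0)), hδ0.le]
    · push_neg at hS2
      have hdecay := f_decay hδ0 hδ1 hCx hCy hx' hy' le_rfl hu0
        (fun s hs => (hS2 s ⟨hs.1.le, hs.2.le⟩).le)
      nlinarith [hδ0.le]
  refine ⟨u, hu0, ?_, ?_, huLδ, hfbound, ?_⟩
  · have h1 : x u i - y u i = -(y u i - x u i) := by ring
    rw [h1, abs_neg, hgu, abs_of_nonneg hδ0.le]
  · intro s h1 h2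
    have h3 := hbefore s h1 h2
    have h4 : x s i - y s i = -(y s i - x s i) := by ring
    rw [h4, abs_neg, abs_of_nonneg (by linarith)]
    exact h3
  · intro t h1 h2
    constructor
    · have h3 := hgrow 0 t le_rfl h1
        (fun s hs => hbefore s hs.1.le (lt_of_lt_of_le hs.2 h2))
      nlinarith
    · rcases lt_or_eq_of_le h2 with h | h
      · have := hbefore t h1 h
        linarith
      · subst h
        linarith

end AuxiliaryLemmas

/-- the pursuit lemma for the last-coordinate field `χ^{(d)}` in the long
cuboid (the index `⟨d-1,_⟩ : Fin d` is the `d`-th coordinate). -/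
theorem statement9 {d : ℕ} (hd : 2 ≤ d) (L δ : ℝ) (hL : 0 < L) (hδ0 : 0 < δ) (hδ1 : δ < 1)
    (x y : ℝ → E d)
    (hxlip : ∃ C, LipschitzOnWith C x (Ici 0)) (hylip : ∃ C, LipschitzOnWith C y (Ici 0))
    (hx0 : x 0 ∈ cuboid d L) (hy0 : y 0 ∈ cuboid d L)
    (hx0d : 0 < x 0 ⟨d - 1, by omega⟩)
    (hxy0 : x 0 ⟨d - 1, by omega⟩ ≤ y 0 ⟨d - 1, by omega⟩)
    (hy' : ∀ᵐ t ∂(volume : Measure ℝ), 0 ≤ t → ∀ v, HasDerivAt y v t → ‖v‖ ≤ 1)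
    (hx' : ∀ᵐ t ∂(volume : Measure ℝ), 0 ≤ t →
      HasDerivAt x (chi δ (⟨d - 1, by omega⟩ : Fin d) (x t) (y t)) t)
    (hycl : ∀ t : ℝ, 0 ≤ t → y t ∈ cuboidCl d L) :
    ∃ u : ℝ, 0 ≤ u ∧ |x u ⟨d - 1, by omega⟩ - y u ⟨d - 1, by omega⟩| ≤ δ ∧
      (∀ s : ℝ, 0 ≤ s → s < u → δ < |x s ⟨d - 1, by omega⟩ - y s ⟨d - 1, by omega⟩|) ∧
      u ≤ L / δ ∧
      ‖proj d (d - 1) (x u - y u)‖ ≤ ‖proj d (d - 1) (x 0 - y 0)‖ + (L + 1) * δ ∧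
      ∀ t : ℝ, 0 ≤ t → t ≤ u →
        x 0 ⟨d - 1, by omega⟩ ≤ x t ⟨d - 1, by omega⟩ ∧
        x t ⟨d - 1, by omega⟩ ≤ y t ⟨d - 1, by omega⟩ := by
  obtain ⟨Cx, hCx⟩ := hxlip
  obtain ⟨Cy, hCy⟩ := hylip
  have hyL : ∀ t : ℝ, 0 ≤ t → y t ⟨d - 1, by omega⟩ ≤ L := fun t ht =>
    ((hycl t ht).2 ⟨d - 1, by omega⟩ rfl).2
  exact statement9_aux L δ hL hδ0 hδ1 ⟨d - 1, by omega⟩ x y hCx hCy hx0d hxy0 hy' hx' hyL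

end PursuitRB
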